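/- Let G be a plane graph whose outer face is bounded by a cycle C, let K be a non-facial cycle in G, and let H be the subgraph of G drawn in the closed disk bounded by K. If G is C-critical for k-coloring, then H is K-critical for k-coloring. -/

import Mathlib

open Set

/-- A plane embedding (drawing) of a simple graph: vertices are mapped injectively to
points of the plane, and every edge is drawn as a simple arc between the images of its
endpoints; arcs meet each other only at images of shared endpoints, and an arc meets
the set of vertex images only at the images of its own endpoints. -/
structure PlaneEmbedding {V : Type*} (G : SimpleGraph V) where
  vert : V → ℝ × ℝ
  vertInj : Function.Injective vert
  arc : Sym2 V → Set (ℝ × ℝ)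
  arc_arc : ∀ e ∈ G.edgeSet, ∃ f : ℝ → ℝ × ℝ,
    ContinuousOn f (Icc 0 1) ∧ InjOn f (Icc 0 1) ∧ f '' Icc 0 1 = arc e ∧
    ∀ u v : V, e = s(u, v) → (f 0 = vert u ∧ f 1 = vert v) ∨ (f 0 = vert v ∧ f 1 = vert u)
  arc_inter : ∀ e ∈ G.edgeSet, ∀ e' ∈ G.edgeSet, e ≠ e' →
    arc e ∩ arc e' ⊆ vert '' {v | v ∈ e ∧ v ∈ e'}
  arc_vert : ∀ e ∈ G.edgeSet, arc e ∩ range vert ⊆ vert '' {v | v ∈ e}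

variable {V : Type*} {G : SimpleGraph V}

/-- The point set of the plane used by the drawing of a subgraph `H` of `G`:
the images of the vertices of `H` together with the arcs of its edges. -/
def PlaneEmbedding.drawing (emb : PlaneEmbedding G) (H : G.Subgraph) : Set (ℝ × ℝ) :=
  emb.vert '' H.verts ∪ ⋃ e ∈ H.edgeSet, emb.arc e

/-- A face of the plane embedding: a connected component of the complement of the
drawing of the whole graph. -/
def PlaneEmbedding.IsFace (emb : PlaneEmbedding G) (F : Set (ℝ × ℝ)) : Prop :=
  ∃ x ∉ emb.drawing ⊤, F = connectedComponentIn (emb.drawing ⊤)ᶜ x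

/-- The closed region bounded by a point set `S` (for `S` a Jordan curve, this is the
closed disk bounded by `S`): `S` together with all bounded connected components of its
complement. -/
def closedRegion (S : Set (ℝ × ℝ)) : Set (ℝ × ℝ) :=
  S ∪ {x | x ∉ S ∧ Bornology.IsBounded (connectedComponentIn Sᶜ x)}

/-- The subgraph of `G` drawn inside a region `D` of the plane: its edges are the edges
of `G` whose arcs lie in `D`, and its vertices are the endpoints of these edges together
with all vertices drawn in `D`. -/
def PlaneEmbedding.drawnIn (emb : PlaneEmbedding G) (D : Set (ℝ × ℝ)) : G.Subgraph where
  verts := {u | emb.vert u ∈ D ∨ ∃ w, G.Adj u w ∧ emb.arc s(u, w) ⊆ D}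
  Adj u v := G.Adj u v ∧ emb.arc s(u, v) ⊆ D
  adj_sub h := h.1
  edge_vert h := Or.inr ⟨_, h⟩
  symm := ⟨fun u v h => ⟨h.1.symm, by rw [Sym2.eq_swap]; exact h.2⟩⟩

/-- `CriticalFor G H C k`: the subgraph `H` of `G` is `C`-critical for `k`-coloring,
i.e. for every proper subgraph `H'` of `H` containing `C` there is a proper `k`-coloring
of `C` that extends to a proper `k`-coloring of `H'` but not to one of `H`. -/
def CriticalFor (G : SimpleGraph V) (H C : G.Subgraph) (k : ℕ) : Prop :=
  ∀ H' : G.Subgraph, C ≤ H' → H' ≤ H → H' ≠ H →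
    ∃ φ : V → Fin k,
      (∀ u v, C.Adj u v → φ u ≠ φ v) ∧
      (∃ ψ : V → Fin k, (∀ v ∈ C.verts, ψ v = φ v) ∧ ∀ u v, H'.Adj u v → ψ u ≠ ψ v) ∧
      ¬ ∃ ψ : V → Fin k, (∀ v ∈ C.verts, ψ v = φ v) ∧ ∀ u v, H.Adj u v → ψ u ≠ ψ v

lemma stmt19_crossing {S A : Set (ℝ × ℝ)} (hA : IsPreconnected A)
    {x y : ℝ × ℝ} (hx : x ∈ A) (hy : y ∈ A) (hxD : x ∈ closedRegion S)
    (hyD : y ∉ closedRegion S) : ∃ q ∈ A, q ∈ S := by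
  by_contra h
  push_neg at h
  have hAS : A ⊆ Sᶜ := fun z hz hzS => h z hz hzS
  have hyS : y ∉ S := fun hyS => hyD (Or.inl hyS)
  have hyb : ¬ Bornology.IsBounded (connectedComponentIn Sᶜ y) :=
    fun hb => hyD (Or.inr ⟨hyS, hb⟩)
  have hxb : Bornology.IsBounded (connectedComponentIn Sᶜ x) := by
    rcases hxD with hxS | hx2
    · exact absurd hxS (hAS hx)
    · exact hx2.2
  have hsub := hA.subset_connectedComponentIn hx hAS
  rw [connectedComponentIn_eq (hsub hy)] at hxb
  exact hyb hxb

lemma stmt19_drawing_mono (emb : PlaneEmbedding G) {W W' : G.Subgraph} (h : W ≤ W') :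
    emb.drawing W ⊆ emb.drawing W' := by
  apply union_subset_union (image_mono (f := emb.vert) h.1)
  exact biUnion_subset_biUnion_left (SimpleGraph.Subgraph.edgeSet_mono h)

lemma stmt19_vert_mem_arc (emb : PlaneEmbedding G) {u v : V} (h : G.Adj u v) :
    emb.vert u ∈ emb.arc s(u, v) := by
  obtain ⟨f, _, _, himg, hend⟩ := emb.arc_arc s(u, v) (G.mem_edgeSet.2 h)
  rcases hend u v rfl with ⟨h0, _⟩ | ⟨_, h1⟩
  · rw [← himg]; exact ⟨0, ⟨le_rfl, by norm_num⟩, h0⟩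
  · rw [← himg]; exact ⟨1, ⟨by norm_num, le_rfl⟩, h1⟩

lemma stmt19_mem_verts_of_vert_mem_drawing (emb : PlaneEmbedding G) {W : G.Subgraph} {v : V}
    (h : emb.vert v ∈ emb.drawing W) : v ∈ W.verts := by
  rcases h with h | h
  · obtain ⟨u, hu, he⟩ := h
    rwa [← emb.vertInj he]
  · simp only [mem_iUnion, exists_prop] at h
    obtain ⟨e, he, hv⟩ := h
    obtain ⟨x, hx, hxv⟩ := emb.arc_vert e (W.edgeSet_subset he) ⟨hv, mem_range_self v⟩
    have hxe : x = v := emb.vertInj hxv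
    exact W.mem_verts_of_mem_edge he (hxe ▸ hx)

lemma stmt19_isClosed_drawing_walk (emb : PlaneEmbedding G) {a : V} (w : G.Walk a a) :
    IsClosed (emb.drawing w.toSubgraph) := by
  apply IsCompact.isClosed
  apply IsCompact.union
  · apply Set.Finite.isCompact
    apply Set.Finite.image
    rw [SimpleGraph.Walk.verts_toSubgraph]
    exact w.support.finite_toSet
  · apply Set.Finite.isCompact_biUnion
    · rw [SimpleGraph.Walk.edgeSet_toSubgraph]
      exact w.edges.finite_toSet
    · intro e he
      obtain ⟨f, hc, _, himg, _⟩ := emb.arc_arc e (w.toSubgraph.edgeSet_subset he)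
      rw [← himg]
      exact isCompact_Icc.image_of_continuousOn hc

lemma stmt19_mem_S_of_closure {S F : Set (ℝ × ℝ)} (hS : IsClosed S) (hF : IsPreconnected F)
    (hFS : F ⊆ Sᶜ) (hFub : ¬ Bornology.IsBounded F) {p : ℝ × ℝ}
    (hp : p ∈ closure F) (hpD : p ∈ closedRegion S) : p ∈ S := by
  by_contra hpS
  have hpb : Bornology.IsBounded (connectedComponentIn Sᶜ p) := by
    rcases hpD with h | h
    · exact absurd h hpS
    · exact h.2
  have hBopen : IsOpen (connectedComponentIn Sᶜ p) := hS.isOpen_compl.connectedComponentIn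
  have hpB : p ∈ connectedComponentIn Sᶜ p := mem_connectedComponentIn hpS
  obtain ⟨y, hyB, hyF⟩ := mem_closure_iff.1 hp _ hBopen hpB
  have h1 : F ⊆ connectedComponentIn Sᶜ y := hF.subset_connectedComponentIn hyF hFS
  exact hFub (hpb.subset (by rw [connectedComponentIn_eq hyB]; exact h1))

lemma stmt19_exists_vert (emb : PlaneEmbedding G) {W : G.Subgraph} {e : Sym2 V}
    (heG : e ∈ G.edgeSet) (hne : e ∉ W.edgeSet) {q : ℝ × ℝ}
    (hq : q ∈ emb.arc e) (hqS : q ∈ emb.drawing W) :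
    ∃ x ∈ W.verts, x ∈ e ∧ q = emb.vert x := by
  rcases hqS with h | h
  · obtain ⟨x, hx, hxq⟩ := h
    obtain ⟨y, hy, hyq⟩ := emb.arc_vert e heG ⟨hq, ⟨x, hxq⟩⟩
    refine ⟨y, ?_, hy, hyq.symm⟩
    rwa [emb.vertInj (hxq.trans hyq.symm)] at hx
  · simp only [mem_iUnion, exists_prop] at h
    obtain ⟨e', he', hq'⟩ := h
    have hee' : e ≠ e' := fun hh => hne (hh ▸ he')
    obtain ⟨x, ⟨hxe, hxe'⟩, hxq⟩ :=
      emb.arc_inter e heG e' (W.edgeSet_subset he') hee' ⟨hq, hq'⟩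
    exact ⟨x, W.mem_verts_of_mem_edge he' hxe', hxe, hxq.symm⟩

lemma stmt19_edge_mem_of_arc_subset (emb : PlaneEmbedding G) {W : G.Subgraph} {e : Sym2 V}
    (heG : e ∈ G.edgeSet) (h : emb.arc e ⊆ emb.drawing W) : e ∈ W.edgeSet := by
  by_contra hne
  have hsub : emb.arc e ⊆ emb.vert '' {x | x ∈ e} := by
    intro q hq
    obtain ⟨x, _, hxe, hq'⟩ := stmt19_exists_vert emb heG hne hq (h hq)
    exact ⟨x, hxe, hq'.symm⟩
  obtain ⟨f, _, hi, himg, _⟩ := emb.arc_arc e heG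
  have hinf : (emb.arc e).Infinite := by
    rw [← himg]
    exact (Set.Icc_infinite (by norm_num : (0:ℝ) < 1)).image hi
  have hfin : ({x | x ∈ e} : Set V).Finite := by
    induction e using Sym2.ind with
    | _ a b =>
      refine ((Set.finite_singleton b).insert a).subset ?_
      intro x hx
      rcases Sym2.mem_iff.1 hx with rfl | rfl
      · exact Set.mem_insert _ _
      · exact Set.mem_insert_of_mem _ rfl
  exact hinf ((hfin.image _).subset hsub)

lemma stmt19_boundary_aux (emb : PlaneEmbedding G) {W : G.Subgraph} {u v : V}
    (hG : G.Adj u v) (hne : s(u, v) ∉ W.edgeSet)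
    (f : ℝ → ℝ × ℝ) (hc : ContinuousOn f (Icc 0 1)) (hi : InjOn f (Icc 0 1))
    (himg : f '' Icc 0 1 = emb.arc s(u, v)) (h0 : f 0 = emb.vert u) (h1 : f 1 = emb.vert v)
    (hnsub : ¬ emb.arc s(u, v) ⊆ closedRegion (emb.drawing W))
    (huD : emb.vert u ∈ closedRegion (emb.drawing W)) : u ∈ W.verts := by
  have heG : s(u, v) ∈ G.edgeSet := G.mem_edgeSet.2 hG
  obtain ⟨p, hparc, hpD⟩ := not_subset.1 hnsub
  rw [← himg] at hparc
  obtain ⟨t₁, ht₁, hft₁⟩ := hparc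
  have hIccsub : Icc (0:ℝ) t₁ ⊆ Icc 0 1 := Icc_subset_Icc le_rfl ht₁.2
  have hA : IsPreconnected (f '' Icc 0 t₁) := isPreconnected_Icc.image f (hc.mono hIccsub)
  have hx : f 0 ∈ f '' Icc 0 t₁ := ⟨0, ⟨le_rfl, ht₁.1⟩, rfl⟩
  have hy : f t₁ ∈ f '' Icc 0 t₁ := ⟨t₁, ⟨ht₁.1, le_rfl⟩, rfl⟩
  have h0D : f 0 ∈ closedRegion (emb.drawing W) := h0 ▸ huD
  have hpD' : f t₁ ∉ closedRegion (emb.drawing W) := hft₁ ▸ hpD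
  obtain ⟨q, hqA, hqS⟩ := stmt19_crossing hA hx hy h0D hpD'
  have hqarc : q ∈ emb.arc s(u, v) := himg ▸ (image_mono (f := f) hIccsub hqA)
  obtain ⟨x, hxW, hxe, hqeq⟩ := stmt19_exists_vert emb heG hne hqarc hqS
  rcases Sym2.mem_iff.1 hxe with rfl | rfl
  · exact hxW
  · exfalso
    obtain ⟨t, ht, hft⟩ := hqA
    have hft1 : f t = f 1 := by rw [hft, hqeq, h1]
    have ht1 : t = 1 := hi (hIccsub ht) (right_mem_Icc.2 (by norm_num)) hft1
    have ht₁1 : t₁ = 1 := le_antisymm ht₁.2 (ht1 ▸ ht.2)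
    apply hpD'
    rw [ht₁1, h1, ← hqeq]
    exact Or.inl hqS

lemma stmt19_boundary (emb : PlaneEmbedding G) {W : G.Subgraph} {u v : V}
    (hG : G.Adj u v) (hne : s(u, v) ∉ W.edgeSet)
    (hnsub : ¬ emb.arc s(u, v) ⊆ closedRegion (emb.drawing W))
    (huD : emb.vert u ∈ closedRegion (emb.drawing W)) : u ∈ W.verts := by
  obtain ⟨f, hc, hi, himg, hend⟩ := emb.arc_arc s(u, v) (G.mem_edgeSet.2 hG)
  have hmap : ∀ t ∈ Icc (0:ℝ) 1, 1 - t ∈ Icc (0:ℝ) 1 :=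
    fun t ht => ⟨by linarith [ht.2], by linarith [ht.1]⟩
  rcases hend u v rfl with ⟨h0, h1⟩ | ⟨h0, h1⟩
  · exact stmt19_boundary_aux emb hG hne f hc hi himg h0 h1 hnsub huD
  · refine stmt19_boundary_aux emb hG hne (fun t => f (1 - t)) ?_ ?_ ?_ ?_ ?_ hnsub huD
    · exact hc.comp ((continuous_const.sub continuous_id).continuousOn) hmap
    · intro a ha b hb hab
      have := hi (hmap a ha) (hmap b hb) hab
      linarith
    · rw [← himg]
      ext y
      constructor
      · rintro ⟨t, ht, rfl⟩; exact ⟨1 - t, hmap t ht, rfl⟩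
      · rintro ⟨t, ht, rfl⟩
        exact ⟨1 - t, hmap t ht, by norm_num⟩
    · show f (1 - 0) = _
      rw [sub_zero, h1]
    · show f (1 - 1) = _
      rw [sub_self, h0]

lemma stmt19_vert_mem_of_mem_drawnIn (emb : PlaneEmbedding G) {D : Set (ℝ × ℝ)} {u : V}
    (h : u ∈ (emb.drawnIn D).verts) : emb.vert u ∈ D := by
  rcases (h : emb.vert u ∈ D ∨ ∃ w, G.Adj u w ∧ emb.arc s(u, w) ⊆ D) with h | ⟨w, hw, harc⟩
  · exact h
  · exact harc (stmt19_vert_mem_arc emb hw)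

/-- If `G` is a plane graph whose outer face is bounded by a cycle `C`, `K` is a
non-facial cycle of `G`, and `H` is the subgraph of `G` drawn in the closed disk
bounded by `K`, then `C`-criticality of `G` for `k`-coloring implies `K`-criticality
of `H` for `k`-coloring. -/
theorem stmt_19 (emb : PlaneEmbedding G) (k : ℕ)
    {c₀ : V} (C : G.Walk c₀ c₀) (hC : C.IsCycle)
    (houter : ∃ F, emb.IsFace F ∧ ¬ Bornology.IsBounded F ∧
      frontier F = emb.drawing C.toSubgraph)
    {k₀ : V} (K : G.Walk k₀ k₀) (hK : K.IsCycle)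
    (hKnonfacial : ¬ ∃ F, emb.IsFace F ∧ frontier F = emb.drawing K.toSubgraph)
    (hGcrit : CriticalFor G ⊤ C.toSubgraph k) :
    CriticalFor G (emb.drawnIn (closedRegion (emb.drawing K.toSubgraph)))
      K.toSubgraph k := by
  classical
  obtain ⟨F, ⟨x₀, hx₀, hFdef⟩, hFub, hFfr⟩ := houter
  set S : Set (ℝ × ℝ) := emb.drawing K.toSubgraph with hSdef
  set D : Set (ℝ × ℝ) := closedRegion S with hDdef
  set H : G.Subgraph := emb.drawnIn D with hHdef
  have hSclosed : IsClosed S := stmt19_isClosed_drawing_walk emb K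
  have hFpre : IsPreconnected F := by
    rw [hFdef]; exact isPreconnected_connectedComponentIn
  have hFS : F ⊆ Sᶜ := by
    rw [hFdef]
    intro y hy hyS
    exact (connectedComponentIn_subset _ _ hy) (stmt19_drawing_mono emb le_top hyS)
  have hclo : ∀ p ∈ closure F, p ∈ D → p ∈ S := fun p hp hpD =>
    stmt19_mem_S_of_closure hSclosed hFpre hFS hFub hp hpD
  intro H' hKH' hH'H hne
  have hCD : ∀ v ∈ C.toSubgraph.verts, emb.vert v ∈ D → v ∈ K.toSubgraph.verts := by
    intro v hv hvD
    have h1 : emb.vert v ∈ emb.drawing C.toSubgraph := Set.mem_union_left _ ⟨v, hv, rfl⟩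
    rw [← hFfr] at h1
    exact stmt19_mem_verts_of_vert_mem_drawing emb (hclo _ (frontier_subset_closure h1) hvD)
  have hKH : K.toSubgraph ≤ H := le_trans hKH' hH'H
  have hBd : ∀ u v : V, G.Adj u v → ¬ H.Adj u v → u ∈ H.verts → u ∈ K.toSubgraph.verts := by
    intro u v hGuv hHuv hu
    have hnsub : ¬ emb.arc s(u, v) ⊆ D := fun hsub => hHuv (show G.Adj u v ∧ emb.arc s(u, v) ⊆ D from ⟨hGuv, hsub⟩)
    have hne' : s(u, v) ∉ K.toSubgraph.edgeSet := fun hmem =>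
      hHuv (hKH.2 (SimpleGraph.Subgraph.mem_edgeSet.1 hmem))
    exact stmt19_boundary emb hGuv hne' hnsub (stmt19_vert_mem_of_mem_drawnIn emb hu)
  by_cases hedge : ∀ a b, H.Adj a b → H'.Adj a b
  · -- degenerate case: H' misses only vertices; such a vertex is isolated, contradiction
    have hv : ¬ H.verts ⊆ H'.verts := by
      intro hsub
      exact hne (le_antisymm hH'H ⟨hsub, fun a b h => hedge a b h⟩)
    obtain ⟨v₀, hv₀H, hv₀H'⟩ := not_subset.1 hv
    have hv₀K : v₀ ∉ K.toSubgraph.verts := fun h => hv₀H' (hKH'.1 h)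
    have hiso : ∀ w, ¬ G.Adj v₀ w := by
      intro w hadj
      by_cases hHa : H.Adj v₀ w
      · exact hv₀H' (H'.edge_vert (hedge _ _ hHa))
      · exact hv₀K (hBd v₀ w hadj hHa hv₀H)
    have hv₀D : emb.vert v₀ ∈ D := stmt19_vert_mem_of_mem_drawnIn emb hv₀H
    have hv₀C : v₀ ∉ C.toSubgraph.verts := fun h => hv₀K (hCD v₀ h hv₀D)
    set H'' : G.Subgraph :=
      { verts := {x | x ≠ v₀}
        Adj := G.Adj
        adj_sub := fun h => h
        edge_vert := fun {a b} h ha => hiso b (ha ▸ h)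
        symm := ⟨fun a b h => h.symm⟩ } with hH''def
    have hCH'' : C.toSubgraph ≤ H'' :=
      ⟨fun x hx hxv => hv₀C (hxv ▸ hx), fun a b h => C.toSubgraph.adj_sub h⟩
    have hne'' : H'' ≠ ⊤ := by
      intro h
      have : v₀ ∈ H''.verts := by rw [h]; trivial
      exact this rfl
    obtain ⟨φ, hφ, ⟨ψ, hψC, hψ⟩, hnoext⟩ := hGcrit H'' hCH'' le_top hne''
    exact (hnoext ⟨ψ, hψC, fun a b h => hψ a b (SimpleGraph.Subgraph.top_adj.1 h)⟩).elim
  · push_neg at hedge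
    obtain ⟨a, b, hab, hab'⟩ := hedge
    set H'' : G.Subgraph :=
      { verts := Set.univ
        Adj := fun u v => H'.Adj u v ∨ (G.Adj u v ∧ ¬ H.Adj u v)
        adj_sub := fun h => h.elim (fun h => H'.adj_sub h) (fun h => h.1)
        edge_vert := fun _ => Set.mem_univ _
        symm := ⟨fun u v h => h.elim (fun h => Or.inl h.symm)
          (fun h => Or.inr ⟨h.1.symm, fun hh => h.2 hh.symm⟩)⟩ } with hH''def
    have hCH'' : C.toSubgraph ≤ H'' := by
      refine ⟨fun x _ => Set.mem_univ x, ?_⟩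
      intro u v hCad
      by_cases hH : H.Adj u v
      · left
        have harcC : emb.arc s(u, v) ⊆ emb.drawing C.toSubgraph := fun p hp =>
          Set.mem_union_right _ (Set.mem_biUnion (SimpleGraph.Subgraph.mem_edgeSet.2 hCad) hp)
        have harcS : emb.arc s(u, v) ⊆ S := fun p hp =>
          hclo p (frontier_subset_closure (hFfr ▸ harcC hp)) (hH.2 hp)
        have heK : s(u, v) ∈ K.toSubgraph.edgeSet :=
          stmt19_edge_mem_of_arc_subset emb (G.mem_edgeSet.2 (C.toSubgraph.adj_sub hCad)) harcS
        exact hKH'.2 (SimpleGraph.Subgraph.mem_edgeSet.1 heK)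
      · exact Or.inr ⟨C.toSubgraph.adj_sub hCad, hH⟩
    have hne'' : H'' ≠ ⊤ := by
      intro h
      have h1 : H''.Adj a b := by
        rw [h]; exact SimpleGraph.Subgraph.top_adj.2 (H.adj_sub hab)
      rcases h1 with h1 | h1
      · exact hab' h1
      · exact h1.2 hab
    obtain ⟨φ, hφ, ⟨ψ, hψC, hψ⟩, hnoext⟩ := hGcrit H'' hCH'' le_top hne''
    refine ⟨ψ, fun u v h => hψ u v (Or.inl (hKH'.2 h)),
      ⟨ψ, fun v _ => rfl, fun u v h => hψ u v (Or.inl h)⟩, ?_⟩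
    rintro ⟨θ, hθK, hθ⟩
    apply hnoext
    refine ⟨fun x => if x ∈ H.verts then θ x else ψ x, ?_, ?_⟩
    · intro x hx
      show (if x ∈ H.verts then θ x else ψ x) = φ x
      by_cases hxH : x ∈ H.verts
      · rw [if_pos hxH, hθK x (hCD x hx (stmt19_vert_mem_of_mem_drawnIn emb hxH))]
        exact hψC x hx
      · rw [if_neg hxH]
        exact hψC x hx
    · intro u v htop
      show (if u ∈ H.verts then θ u else ψ u) ≠ (if v ∈ H.verts then θ v else ψ v)
      have hGuv : G.Adj u v := SimpleGraph.Subgraph.top_adj.1 htop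
      by_cases hH : H.Adj u v
      · rw [if_pos (H.edge_vert hH), if_pos (H.edge_vert hH.symm)]
        exact hθ u v hH
      · have hneψ : ψ u ≠ ψ v := hψ u v (Or.inr ⟨hGuv, hH⟩)
        have hu : (if u ∈ H.verts then θ u else ψ u) = ψ u := by
          by_cases huH : u ∈ H.verts
          · rw [if_pos huH]; exact hθK u (hBd u v hGuv hH huH)
          · rw [if_neg huH]
        have hv : (if v ∈ H.verts then θ v else ψ v) = ψ v := by
          by_cases hvH : v ∈ H.verts
          · rw [if_pos hvH]
            exact hθK v (hBd v u hGuv.symm (fun hh => hH hh.symm) hvH)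
          · rw [if_neg hvH]
        rw [hu, hv]
        exact hneψ
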